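/- arXiv:2302.01605 — 2 statements merged into one kernel-verified Lean document; each statement's English description precedes it below -/
import Mathlib

section
/- Consider a single-agent finite MDP with transition kernel P', discount γ ∈ [0,1), temperature α > 0, and a fixed everywhere-positive policy π. Define the advantage A(s,a) = α(log π(a|s) - log π(a*(s)|s)) where a*(s) = argmax_a π(a|s), choose any function b : S → ℝ, define the soft value V via V(s) = E[Σ_t γ^t (Σ_{a'} π(a'|s_t)A(s_t,a') + b(s_t) + α·H(π(·|s_t))) | s_0 = s, a_t = a*(s_t)], set V*(s) = V(s) - Σ_a π(a|s)A(s,a) - α·H(π(·|s)), and define the reward R(s,a) = A(s,a) + V*(s) - γ·E_{s' ~ P'(·|s,a)}[V(s')]. Then R(s, a*(s)) = b(s) for all s, and the Q-function Q(s,a) = R(s,a) + γ·E_{s'~P'(·|s,a)}[V(s')] satisfies π(a|s) ∝ exp(Q(s,a)/α) for every state s. -/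
noncomputable def entropy {A : Type*} [Fintype A] (d : A → ℝ) : ℝ :=
  -∑ a, d a * Real.log (d a)

/-- Distribution over states at time `t`, starting from state `s`, when the
deterministic policy `astar` is followed in a single-agent MDP with transition
kernel `P'`. -/
noncomputable def visitDist {S A : Type*} [Fintype S] [DecidableEq S]
    (P' : S → A → S → ℝ) (astar : S → A) : ℕ → S → S → ℝ
  | 0, s => fun s' => if s' = s then 1 else 0
  | (n + 1), s => fun s'' => ∑ s', visitDist P' astar n s s' * P' s' (astar s') s''

/-- Reward construction for a fixed everywhere-positive policy `π` in a
single-agent finite MDP: with the advantage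
`A(s,a) = α(log π(a|s) − log π(a*(s)|s))`, an arbitrary `b : S → ℝ`, the soft
value `V(s) = E[Σ_t γ^t (Σ_a' π(a'|s_t)A(s_t,a') + b(s_t) + αH(π(·|s_t))) | s_0 = s, a_t = a*(s_t)]`,
`V*(s) = V(s) − Σ_a π(a|s)A(s,a) − αH(π(·|s))`, and the reward
`R(s,a) = A(s,a) + V*(s) − γ E_{s'∼P'(·|s,a)}[V(s')]`, one has
`R(s, a*(s)) = b(s)` for all `s`, and `π(·|s) ∝ exp(Q(s,·)/α)` where
`Q(s,a) = R(s,a) + γ E_{s'∼P'(·|s,a)}[V(s')]`. -/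
theorem reward_construction_makes_policy_softmax
    {S A : Type*} [Fintype S] [Fintype A] [Nonempty S] [Nonempty A] [DecidableEq S]
    (P' : S → A → S → ℝ) (γ α : ℝ) (π : S → A → ℝ) (astar : S → A)
    (b : S → ℝ) (Adv : S → A → ℝ) (V Vstar : S → ℝ) (R Q : S → A → ℝ)
    (hP' : ∀ s a, (∀ s', 0 ≤ P' s a s') ∧ ∑ s', P' s a s' = 1)
    (hπpos : ∀ s a, 0 < π s a) (hπsum : ∀ s, ∑ a, π s a = 1)
    (hastar : ∀ s a, π s a ≤ π s (astar s))
    (hγ0 : 0 ≤ γ) (hγ1 : γ < 1) (hα : 0 < α)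
    (hAdv : ∀ s a, Adv s a = α * (Real.log (π s a) - Real.log (π s (astar s))))
    (hV : ∀ s, V s = ∑' t : ℕ, γ ^ t * ∑ s', visitDist P' astar t s s' *
      ((∑ a, π s' a * Adv s' a) + b s' + α * entropy (π s')))
    (hVstar : ∀ s, Vstar s = V s - (∑ a, π s a * Adv s a) - α * entropy (π s))
    (hR : ∀ s a, R s a = Adv s a + Vstar s - γ * ∑ s', P' s a s' * V s')
    (hQ : ∀ s a, Q s a = R s a + γ * ∑ s', P' s a s' * V s') :
    (∀ s, R s (astar s) = b s) ∧
    (∀ s, ∃ c : ℝ, 0 < c ∧ ∀ a, π s a = c * Real.exp (Q s a / α)) := by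
  classical
  set f : S → ℝ := fun s' => (∑ a, π s' a * Adv s' a) + b s' + α * entropy (π s') with hf
  set g : ℕ → S → ℝ := fun t s => ∑ s', visitDist P' astar t s s' * f s' with hg
  -- rows of visitDist are probability distributions
  have hD : ∀ t (s : S), (∀ s', 0 ≤ visitDist P' astar t s s') ∧
      (∑ s', visitDist P' astar t s s') = 1 := by
    intro t
    induction t with
    | zero =>
      intro s
      constructor
      · intro s'; simp only [visitDist]; split <;> norm_num
      · simp [visitDist]
    | succ n ih =>
      intro s
      constructor
      · intro s''
        apply Finset.sum_nonneg
        intro s' _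
        exact mul_nonneg ((ih s).1 s') ((hP' s' (astar s')).1 s'')
      · show (∑ s'', ∑ s', visitDist P' astar n s s' * P' s' (astar s') s'') = 1
        rw [Finset.sum_comm]
        simp_rw [← Finset.mul_sum]
        calc (∑ s', visitDist P' astar n s s' * ∑ s'', P' s' (astar s') s'')
            = ∑ s', visitDist P' astar n s s' * 1 := by
              apply Finset.sum_congr rfl; intro s' _; rw [(hP' s' (astar s')).2]
          _ = 1 := by simp [(ih s).2]
  -- Chapman-Kolmogorov (first-step form)
  have hchap : ∀ n (s s'' : S), visitDist P' astar (n+1) s s'' =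
      ∑ s', P' s (astar s) s' * visitDist P' astar n s' s'' := by
    intro n
    induction n with
    | zero =>
      intro s s''
      show (∑ s', visitDist P' astar 0 s s' * P' s' (astar s') s'') = _
      simp [visitDist]
    | succ n ih =>
      intro s s''
      show (∑ u, visitDist P' astar (n+1) s u * P' u (astar u) s'') = _
      calc (∑ u, visitDist P' astar (n+1) s u * P' u (astar u) s'')
          = ∑ u, (∑ s', P' s (astar s) s' * visitDist P' astar n s' u) * P' u (astar u) s'' := by
            simp_rw [ih]
        _ = ∑ s', P' s (astar s) s' * ∑ u, visitDist P' astar n s' u * P' u (astar u) s'' := by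
            simp_rw [Finset.sum_mul, mul_assoc]
            rw [Finset.sum_comm]
            simp_rw [Finset.mul_sum]
        _ = ∑ s', P' s (astar s) s' * visitDist P' astar (n+1) s' s'' := rfl
  have hg0 : ∀ s : S, g 0 s = f s := by
    intro s; simp [hg, visitDist]
  have hgrec : ∀ n (s : S), g (n+1) s = ∑ s', P' s (astar s) s' * g n s' := by
    intro n s
    show (∑ s'', visitDist P' astar (n+1) s s'' * f s'') = _
    simp_rw [hchap, Finset.sum_mul]
    rw [Finset.sum_comm]
    simp_rw [hg, Finset.mul_sum, mul_assoc]
  -- bound and summability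
  set C : ℝ := ∑ s' : S, |f s'| with hC
  have hbound : ∀ t (s : S), |g t s| ≤ C := by
    intro t s
    calc |g t s| ≤ ∑ s', |visitDist P' astar t s s' * f s'| := Finset.abs_sum_le_sum_abs _ _
      _ ≤ ∑ s' : S, |f s'| := by
          apply Finset.sum_le_sum
          intro s' _
          rw [abs_mul, abs_of_nonneg ((hD t s).1 s')]
          have hle1 : visitDist P' astar t s s' ≤ 1 := by
            rw [← (hD t s).2]
            exact Finset.single_le_sum (fun i _ => (hD t s).1 i) (Finset.mem_univ s')
          nlinarith [abs_nonneg (f s'), (hD t s).1 s']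
  have hsum : ∀ s : S, Summable (fun t => γ ^ t * g t s) := by
    intro s
    apply Summable.of_norm_bounded (g := fun t => C * γ ^ t)
      ((summable_geometric_of_lt_one hγ0 hγ1).mul_left C)
    intro t
    rw [Real.norm_eq_abs, abs_mul, abs_of_nonneg (pow_nonneg hγ0 t), mul_comm]
    exact mul_le_mul_of_nonneg_right (hbound t s) (pow_nonneg hγ0 t)
  have hVg : ∀ s, V s = ∑' t : ℕ, γ ^ t * g t s := hV
  -- Bellman equation
  have hBell : ∀ s, V s = f s + γ * ∑ s', P' s (astar s) s' * V s' := by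
    intro s
    rw [hVg s, Summable.tsum_eq_zero_add (hsum s)]
    congr 1
    · simp [hg0 s]
    have h1 : ∀ n : ℕ, γ ^ (n+1) * g (n+1) s
        = ∑ s', γ * P' s (astar s) s' * (γ ^ n * g n s') := by
      intro n
      rw [hgrec, Finset.mul_sum]
      apply Finset.sum_congr rfl
      intro s' _
      ring
    calc (∑' n : ℕ, γ ^ (n+1) * g (n+1) s)
        = ∑' n : ℕ, ∑ s', γ * P' s (astar s) s' * (γ ^ n * g n s') := by
          exact tsum_congr h1
      _ = ∑ s', ∑' n : ℕ, γ * P' s (astar s) s' * (γ ^ n * g n s') := by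
          exact Summable.tsum_finsetSum (fun s' _ => (hsum s').mul_left _)
      _ = ∑ s', γ * P' s (astar s) s' * V s' := by
          apply Finset.sum_congr rfl
          intro s' _
          rw [tsum_mul_left, ← hVg s']
      _ = γ * ∑ s', P' s (astar s) s' * V s' := by
          rw [Finset.mul_sum]; simp_rw [mul_assoc]
  have hAdvstar : ∀ s : S, Adv s (astar s) = 0 := by
    intro s; rw [hAdv]; ring
  constructor
  · intro s
    have := hBell s
    rw [hR, hAdvstar, hVstar]
    simp only [hf] at this
    linarith
  · intro s
    refine ⟨π s (astar s) * Real.exp (-(Vstar s) / α), mul_pos (hπpos s (astar s)) (Real.exp_pos _), ?_⟩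
    intro a
    have hQ' : Q s a = Adv s a + Vstar s := by rw [hQ, hR]; ring
    rw [hQ', hAdv]
    rw [mul_assoc, ← Real.exp_add]
    have : -Vstar s / α + (α * (Real.log (π s a) - Real.log (π s (astar s))) + Vstar s) / α
        = Real.log (π s a) - Real.log (π s (astar s)) := by
      field_simp
      ring
    rw [this, Real.exp_sub, Real.exp_log (hπpos s a), Real.exp_log (hπpos s (astar s))]
    rw [mul_comm (π s (astar s)), div_mul_cancel₀ _ (hπpos s (astar s)).ne']
end

section
/- In a finite MDP with reward R, discount γ ∈ [0,1), and temperature α > 0, suppose V : S → ℝ and Q(s,a) = R(s,a) + γ·E_{s'~P(·|s,a)}[V(s')] satisfy: π(a|s) ∝ exp(Q(s,a)/α) and V(s) = Σ_a π(a|s)Q(s,a) + α·H(π(·|s)). Then V is a fixed point of the soft Bellman optimality operator (T*V)(s) = max_{d ∈ Δ(A)} [α·H(d) + Σ_a d(a)(R(s,a) + γ·E_{s'~P(·|s,a)}[V(s')])]. -/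
lemma kl_aux {A : Type*} [Fintype A] (d p : A → ℝ)
    (hd0 : ∀ a, 0 ≤ d a) (hp : ∀ a, 0 < p a)
    (hd1 : ∑ a, d a = 1) (hp1 : ∑ a, p a = 1) :
    ∑ a, d a * (Real.log (p a) - Real.log (d a)) ≤ 0 := by
  have h : ∀ a ∈ Finset.univ, d a * (Real.log (p a) - Real.log (d a)) ≤ p a - d a := by
    intro a _
    rcases eq_or_lt_of_le (hd0 a) with h0 | h0
    · simp [← h0]
      exact le_of_lt (hp a)
    · have hdiv : Real.log (p a) - Real.log (d a) = Real.log (p a / d a) :=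
        (Real.log_div (hp a).ne' h0.ne').symm
      rw [hdiv]
      have hlog : Real.log (p a / d a) ≤ p a / d a - 1 :=
        Real.log_le_sub_one_of_pos (div_pos (hp a) h0)
      calc d a * Real.log (p a / d a) ≤ d a * (p a / d a - 1) :=
            mul_le_mul_of_nonneg_left hlog (hd0 a)
        _ = p a - d a := by field_simp
  calc ∑ a, d a * (Real.log (p a) - Real.log (d a)) ≤ ∑ a, (p a - d a) :=
        Finset.sum_le_sum h
    _ = 0 := by rw [Finset.sum_sub_distrib, hd1, hp1]; ring

/-- If `π(·|s) ∝ exp(Q(s,·)/α)` with `Q(s,a) = R(s,a) + γ E_{s'∼P(·|s,a)}[V(s')]`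
and `V(s) = Σ_a π(a|s) Q(s,a) + α H(π(·|s))`, then `V` is a fixed point of the
soft Bellman optimality operator
`(T*V)(s) = max_{d ∈ Δ(A)} [α H(d) + Σ_a d(a)(R(s,a) + γ E_{s'∼P(·|s,a)}[V(s')])]`. -/
theorem soft_value_fixed_point_of_bellman_operator
    {S A : Type*} [Fintype S] [Fintype A] [Nonempty S] [Nonempty A]
    (P : S → A → S → ℝ) (R : S → A → ℝ) (γ α : ℝ)
    (π : S → A → ℝ) (V : S → ℝ) (Q : S → A → ℝ)
    (hP : ∀ s a, (∀ s', 0 ≤ P s a s') ∧ ∑ s', P s a s' = 1)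
    (hγ0 : 0 ≤ γ) (hγ1 : γ < 1) (hα : 0 < α)
    (hπ : ∀ s, (∀ a, 0 ≤ π s a) ∧ ∑ a, π s a = 1)
    (hQ : ∀ s a, Q s a = R s a + γ * ∑ s', P s a s' * V s')
    (hprop : ∀ s, ∃ c : ℝ, 0 < c ∧ ∀ a, π s a = c * Real.exp (Q s a / α))
    (hV : ∀ s, V s = (∑ a, π s a * Q s a) + α * entropy (π s)) :
    ∀ s, IsGreatest
      {v : ℝ | ∃ d : A → ℝ, (∀ a, 0 ≤ d a) ∧ (∑ a, d a = 1) ∧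
        v = α * entropy d + ∑ a, d a * (R s a + γ * ∑ s', P s a s' * V s')}
      (V s) := by
  intro s
  obtain ⟨c, hc, hcπ⟩ := hprop s
  have hπpos : ∀ a, 0 < π s a := fun a => by rw [hcπ a]; positivity
  have hlogπ : ∀ a, Real.log (π s a) = Real.log c + Q s a / α := by
    intro a
    rw [hcπ a, Real.log_mul hc.ne' (Real.exp_pos _).ne', Real.log_exp]
  have key : ∀ d : A → ℝ, (∑ a, d a = 1) →
      α * entropy d + ∑ a, d a * Q s a
        = α * (∑ a, d a * (Real.log (π s a) - Real.log (d a))) - α * Real.log c := by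
    intro d hd1
    have e1 : ∑ a, d a * (Real.log (π s a) - Real.log (d a))
        = ∑ a, (d a * Real.log c + (d a * Q s a) / α - d a * Real.log (d a)) := by
      refine Finset.sum_congr rfl fun a _ => ?_
      rw [hlogπ a]; ring
    rw [e1, Finset.sum_sub_distrib, Finset.sum_add_distrib, ← Finset.sum_mul,
      ← Finset.sum_div, hd1]
    unfold entropy
    field_simp
    ring
  have hVc : V s = -(α * Real.log c) := by
    rw [hV s, add_comm, key (π s) (hπ s).2]
    simp
  constructor
  · refine ⟨π s, (hπ s).1, (hπ s).2, ?_⟩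
    rw [hV s, add_comm]
    congr 1
    exact Finset.sum_congr rfl fun a _ => by rw [hQ]
  · rintro v ⟨d, hd0, hd1, rfl⟩
    have hQd : ∑ a, d a * (R s a + γ * ∑ s', P s a s' * V s') = ∑ a, d a * Q s a :=
      Finset.sum_congr rfl fun a _ => by rw [hQ]
    rw [hQd, key d hd1, hVc]
    have hkl := kl_aux d (π s) hd0 hπpos hd1 (hπ s).2
    have hmul : α * (∑ a, d a * (Real.log (π s a) - Real.log (d a))) ≤ 0 := by
      have := mul_le_mul_of_nonneg_left hkl hα.le
      simpa using this
    linarith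
end
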